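/- Assume Martin's Axiom MA_κ. Then every well-stratified tree T with no uncountable branches and |T| ≤ κ admits a strictly monotonic map into ℚ. -/

import Mathlib

set_option linter.deprecated false
set_option maxHeartbeats 1000000


/-- A partial order is rooted if it has a minimum element. -/
def IsRooted (X : Type*) [PartialOrder X] : Prop := ∃ r : X, ∀ x, r ≤ x

/-- The set of predecessors of every element is linearly ordered. -/
def DownLinear (X : Type*) [PartialOrder X] : Prop :=
  ∀ x y z : X, y ≤ x → z ≤ x → y ≤ z ∨ z ≤ y

/-- A well-stratified tree: a rooted partial order in which the set of
predecessors of every element is well-ordered. -/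
def IsWSTree (T : Type*) [PartialOrder T] : Prop :=
  IsRooted T ∧ DownLinear T ∧ ∀ x : T, (Set.Iio x).IsWF

/-- A filter on a forcing poset: nonempty, upwards closed and downwards
directed. -/
def IsPosetFilter {P : Type*} [PartialOrder P] (F : Set P) : Prop :=
  F.Nonempty ∧ (∀ p ∈ F, ∀ q, p ≤ q → q ∈ F) ∧
    ∀ p ∈ F, ∀ q ∈ F, ∃ r ∈ F, r ≤ p ∧ r ≤ q

/-- A forcing poset (a partial order with a maximum element) is ccc if every
set of pairwise incompatible elements is countable. -/
def ForcingCCC (P : Type*) [PartialOrder P] : Prop :=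
  ∀ A : Set P, (A.Pairwise fun p q => ¬ ∃ r : P, r ≤ p ∧ r ≤ q) → A.Countable

/-- Martin's Axiom at `κ`: for every ccc forcing poset and every family of at
most `κ`-many dense subsets there is a filter meeting all of them. -/
def MartinsAxiom (κ : Cardinal) : Prop :=
  ∀ (P : Type) [PartialOrder P] [OrderTop P], ForcingCCC P →
    ∀ (ι : Type) (D : ι → Set P), Cardinal.mk ι ≤ κ →
      (∀ i, ∀ p : P, ∃ q ≤ p, q ∈ D i) →
      ∃ F : Set P, IsPosetFilter F ∧ ∀ i, (F ∩ D i).Nonempty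

universe uR

noncomputable def WellFounded.rank {α : Type uR} {r : α → α → Prop} (hwf : WellFounded r)
    (a : α) : Ordinal.{uR} :=
  (hwf.apply a).rank

theorem WellFounded.rank_eq {α : Type uR} {r : α → α → Prop} (hwf : WellFounded r) (a : α) :
    hwf.rank a = ⨆ b : { b // r b a }, Order.succ (hwf.rank b) :=
  (hwf.apply a).rank_eq

theorem WellFounded.rank_lt_of_rel {α : Type uR} {r : α → α → Prop} (hwf : WellFounded r)
    {a b : α} (h : r a b) : hwf.rank a < hwf.rank b :=
  Acc.rank_lt_of_rel _ h

namespace MAWS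

variable {T : Type} [PartialOrder T]

/-- uncountable abbreviation -/
abbrev Unc (s : Set T) : Prop := ¬ s.Countable

lemma chain_ctble (hcb : ∀ B : Set T, IsMaxChain (· ≤ ·) B → B.Countable)
    {c : Set T} (hc : IsChain (· ≤ ·) c) : c.Countable := by
  obtain ⟨M, hM, hcM⟩ := hc.exists_maxChain
  exact (hcb M hM).mono hcM

lemma isChain_Iic (hDL : DownLinear T) (x : T) : IsChain (· ≤ ·) (Set.Iic x) :=
  fun a ha b hb _ => hDL x a b ha hb

lemma ctble_Iic (hDL : DownLinear T)
    (hcb : ∀ B : Set T, IsMaxChain (· ≤ ·) B → B.Countable) (x : T) :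
    (Set.Iic x).Countable :=
  chain_ctble hcb (isChain_Iic hDL x)

lemma wf_lt (hWF : ∀ x : T, (Set.Iio x).IsWF) :
    WellFounded ((· < ·) : T → T → Prop) := by
  constructor
  intro a
  constructor
  intro y hy
  have : ∀ z ∈ Set.Iio a, Acc ((· < ·) : T → T → Prop) z := by
    intro z hz
    refine (hWF a).induction hz ?_
    intro w hw ih
    constructor
    intro u hu
    exact ih u (lt_trans hu hw) hu
  exact this y hy

section Rank

variable (hwf : WellFounded ((· < ·) : T → T → Prop))

lemma rank_lt_of_lt {a b : T} (h : a < b) : hwf.rank a < hwf.rank b :=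
  hwf.rank_lt_of_rel h

/-- ranks are countable ordinals -/
lemma rank_lt_omega1 (hDL : DownLinear T)
    (hcb : ∀ B : Set T, IsMaxChain (· ≤ ·) B → B.Countable) (x : T) :
    hwf.rank x < (Cardinal.aleph 1).ord := by
  induction x using hwf.induction with
  | _ x ih =>
    rw [hwf.rank_eq]
    apply Cardinal.iSup_lt_ord_of_isRegular Cardinal.isRegular_aleph_one
    · have hct : (Set.Iio x).Countable := ((ctble_Iic hDL hcb x).mono Set.Iio_subset_Iic_self)
      have : Countable {b : T // b < x} := hct.to_subtype
      exact lt_of_le_of_lt (Cardinal.mk_le_aleph0_iff.mpr this) Cardinal.aleph0_lt_aleph_one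
    · rintro ⟨b, hb⟩
      have hlim : Order.IsSuccLimit ((Cardinal.aleph 1).ord) :=
        Cardinal.isSuccLimit_ord Cardinal.aleph0_lt_aleph_one.le
      exact hlim.succ_lt (ih b hb)

end Rank

end MAWS

namespace MAWS2
open MAWS

variable {T : Type} [PartialOrder T]

lemma ctble_Iic_ordinal {γ : Ordinal} (h : γ < (Cardinal.aleph 1).ord) :
    (Set.Iic γ).Countable := by
  have hsub : Set.Iic γ ⊆ Set.Iio (γ + 1) := by
    intro β hβ
    exact lt_of_le_of_lt hβ (Order.lt_succ γ)
  have hlim : Order.IsSuccLimit ((Cardinal.aleph 1).ord) :=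
    Cardinal.isSuccLimit_ord Cardinal.aleph0_lt_aleph_one.le
  have hcard : (γ + 1).card ≤ Cardinal.aleph0 := by
    have h1 : γ + 1 < (Cardinal.aleph 1).ord := by
      have := hlim.succ_lt h
      simpa using this
    have h2 := Cardinal.lt_ord.mp h1
    rw [← Cardinal.succ_aleph0, Order.lt_succ_iff] at h2
    exact h2
  have hmk : Cardinal.mk (Set.Iio (γ + 1)) ≤ Cardinal.aleph0 := by
    rw [Ordinal.mk_Iio_ordinal]
    exact (Cardinal.lift_le.mpr hcard).trans_eq (by simp)
  exact (Cardinal.le_aleph0_iff_set_countable.mp hmk).mono hsub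

lemma ctble_of_rank_bounded (hwf : WellFounded ((· < ·) : T → T → Prop))
    (S : Set T) (hlev : ∀ β, {v ∈ S | hwf.rank v = β}.Countable)
    {γ : Ordinal} (hγ : (Set.Iic γ).Countable)
    (hbd : ∀ v ∈ S, hwf.rank v ≤ γ) : S.Countable := by
  have hsub : S ⊆ ⋃ β ∈ Set.Iic γ, {v ∈ S | hwf.rank v = β} := by
    intro v hv
    exact Set.mem_biUnion (hbd v hv) ⟨hv, rfl⟩
  exact (hγ.biUnion fun β _ => hlev β).mono hsub

/-- Zorn extraction of an uncountable antichain from a set with countable up-degrees. -/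
lemma antichain_extract (hDL : DownLinear T)
    (hcb : ∀ B : Set T, IsMaxChain (· ≤ ·) B → B.Countable)
    (S : Set T) (hS : ¬ S.Countable)
    (hup : ∀ v ∈ S, (S ∩ Set.Ioi v).Countable) :
    ∃ A ⊆ S, ¬ A.Countable ∧ A.Pairwise fun x y => ¬ x ≤ y ∧ ¬ y ≤ x := by
  set 𝒜 : Set (Set T) := {A | A ⊆ S ∧ A.Pairwise fun x y => ¬ x ≤ y ∧ ¬ y ≤ x} with h𝒜
  have hZ : ∀ c ⊆ 𝒜, IsChain (· ⊆ ·) c → c.Nonempty → ∃ ub ∈ 𝒜, ∀ s ∈ c, s ⊆ ub := by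
    intro c hcS hchain hcne
    refine ⟨⋃₀ c, ⟨?_, ?_⟩, fun s hs => Set.subset_sUnion_of_mem hs⟩
    · exact Set.sUnion_subset fun s hs => (hcS hs).1
    · intro x hx y hy hne
      obtain ⟨sx, hsx, hxs⟩ := hx
      obtain ⟨sy, hsy, hys⟩ := hy
      rcases hchain.total hsx hsy with h | h
      · exact (hcS hsy).2 (h hxs) hys hne
      · exact (hcS hsx).2 hxs (h hys) hne
  have hempty : (∅ : Set T) ∈ 𝒜 := ⟨by simp, by simp⟩
  obtain ⟨A, -, hmax⟩ := zorn_subset_nonempty 𝒜 hZ ∅ hempty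
  refine ⟨A, hmax.prop.1, ?_, hmax.prop.2⟩
  intro hctA
  -- A countable: find a fresh incomparable element
  have hcov : (A ∪ ⋃ a ∈ A, (Set.Iic a ∪ (S ∩ Set.Ioi a))).Countable := by
    refine hctA.union (hctA.biUnion fun a ha => ?_)
    exact (ctble_Iic hDL hcb a).union (hup a (hmax.prop.1 ha))
  obtain ⟨v, hvS, hvn⟩ : ∃ v ∈ S, v ∉ A ∪ ⋃ a ∈ A, (Set.Iic a ∪ (S ∩ Set.Ioi a)) := by
    by_contra h
    push_neg at h
    exact hS (hcov.mono h)
  have hvA : v ∉ A := fun h => hvn (Set.mem_union_left _ h)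
  have hfresh : ∀ a ∈ A, ¬ v ≤ a ∧ ¬ a ≤ v := by
    intro a ha
    have : v ∉ Set.Iic a ∪ (S ∩ Set.Ioi a) := by
      intro h
      exact hvn (Set.mem_union_right _ (Set.mem_biUnion ha h))
    constructor
    · intro hle; exact this (Set.mem_union_left _ hle)
    · intro hle
      rcases lt_or_eq_of_le hle with hlt | rfl
      · exact this (Set.mem_union_right _ ⟨hvS, hlt⟩)
      · exact hvA ha
  have hA' : insert v A ∈ 𝒜 := by
    constructor
    · exact Set.insert_subset hvS hmax.prop.1
    · refine Set.Pairwise.insert hmax.prop.2 ?_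
      intro a ha hne
      exact ⟨⟨(hfresh a ha).1, (hfresh a ha).2⟩, ⟨(hfresh a ha).2, (hfresh a ha).1⟩⟩
  have hsub2 : insert v A ⊆ A := hmax.le_of_ge hA' (Set.subset_insert v A)
  exact hvA (hsub2 (Set.mem_insert v A))

def ChainCond (T : Type) [PartialOrder T] (W : Set T) : Type :=
  {c : Finset T // (∀ x ∈ c, x ∈ W) ∧ IsChain (· ≤ ·) (↑c : Set T)}

instance (W : Set T) : PartialOrder (ChainCond T W) where
  le c d := d.1 ⊆ c.1
  le_refl c := Finset.Subset.refl _
  le_trans a b c hab hbc := Finset.Subset.trans hbc hab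
  le_antisymm a b hab hba := Subtype.ext (Finset.Subset.antisymm hba hab)

instance (W : Set T) : OrderTop (ChainCond T W) where
  top := ⟨∅, by simp, by simp [IsChain]⟩
  le_top c := by
    show (∅ : Finset _) ⊆ c.1
    simp

lemma chain_greatest {c : Finset T} (hne : c.Nonempty)
    (hchain : IsChain (· ≤ ·) (↑c : Set T)) : ∃ m ∈ c, ∀ x ∈ c, x ≤ m := by
  obtain ⟨m, hm, hmax⟩ := Set.Finite.exists_maximalFor id (↑c : Set T) (Finset.finite_toSet c)
    (by exact_mod_cast hne)
  refine ⟨m, by exact_mod_cast hm, ?_⟩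
  intro x hx
  by_cases hxm : x = m
  · exact hxm.le
  · rcases hchain (by exact_mod_cast hx) hm hxm with h | h
    · exact h
    · exact hmax (by exact_mod_cast hx) h




/-- Key lemma: under MA, every uncountable subset of the tree contains an
uncountable antichain. -/
lemma exists_unc_antichain (κ : Cardinal) (hMA : MartinsAxiom κ)
    (hDL : DownLinear T) (hWF : ∀ x : T, (Set.Iio x).IsWF)
    (hcb : ∀ B : Set T, IsMaxChain (· ≤ ·) B → B.Countable)
    (hcard : Cardinal.mk T ≤ κ)
    (V : Set T) (hV : ¬ V.Countable) :
    ∃ A ⊆ V, ¬ A.Countable ∧ A.Pairwise fun x y => ¬ x ≤ y ∧ ¬ y ≤ x := by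
  classical
  set W : Set T := {v ∈ V | ¬ (V ∩ Set.Ioi v).Countable} with hWdef
  by_cases h1 : (V \ W).Countable
  swap
  · have hup : ∀ v ∈ V \ W, ((V \ W) ∩ Set.Ioi v).Countable := by
      intro v hv
      have hvc : (V ∩ Set.Ioi v).Countable := by
        by_contra hc
        exact hv.2 ⟨hv.1, hc⟩
      exact hvc.mono (Set.inter_subset_inter_left _ Set.diff_subset)
    obtain ⟨A, hAs, hAu, hAp⟩ := antichain_extract hDL hcb (V \ W) h1 hup
    exact ⟨A, hAs.trans Set.diff_subset, hAu, hAp⟩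
  · have hW : ¬ W.Countable := by
      intro h
      refine hV ((h.union h1).mono ?_)
      intro v hv
      by_cases hvW : v ∈ W
      · exact Set.mem_union_left _ hvW
      · exact Set.mem_union_right _ ⟨hv, hvW⟩
    set W2 : Set T := {v ∈ W | (W ∩ Set.Ioi v).Countable} with hW2def
    by_cases h2 : W2.Countable
    swap
    · have hup : ∀ v ∈ W2, (W2 ∩ Set.Ioi v).Countable := by
        intro v hv
        exact hv.2.mono (Set.inter_subset_inter_left _ (Set.sep_subset _ _))
      obtain ⟨A, hAs, hAu, hAp⟩ := antichain_extract hDL hcb W2 h2 hup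
      exact ⟨A, fun x hx => ((hAs hx).1 : x ∈ W).1, hAu, hAp⟩
    · set Ws : Set T := W \ W2 with hWsdef
      have hWs : ¬ Ws.Countable := by
        intro h
        refine hW ((h.union h2).mono ?_)
        intro v hv
        by_cases hv2 : v ∈ W2
        · exact Set.mem_union_right _ hv2
        · exact Set.mem_union_left _ ⟨hv, hv2⟩
      have hWsV : Ws ⊆ V := fun v hv => hv.1.1
      have hrich : ∀ v ∈ Ws, ¬ (Ws ∩ Set.Ioi v).Countable := by
        intro v hv hc
        have hnc : ¬ (W ∩ Set.Ioi v).Countable := by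
          intro hctb
          exact hv.2 ⟨hv.1, hctb⟩
        apply hnc
        refine ((hc.union h2).mono ?_)
        rintro x ⟨hxW, hxgt⟩
        by_cases hx2 : x ∈ W2
        · exact Set.mem_union_right _ hx2
        · exact Set.mem_union_left _ ⟨⟨hxW, hx2⟩, hxgt⟩
      have hwf : WellFounded ((· < ·) : T → T → Prop) := wf_lt hWF
      by_cases hL : ∀ β : Ordinal, {v ∈ Ws | hwf.rank v = β}.Countable
      swap
      · push_neg at hL
        obtain ⟨β, hβ⟩ := hL
        refine ⟨{v ∈ Ws | hwf.rank v = β}, fun x hx => hWsV hx.1, hβ, ?_⟩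
        intro x hx y hy hne
        have hr : hwf.rank x = hwf.rank y := by rw [hx.2, hy.2]
        constructor
        · intro hle
          have hlt : x < y := lt_of_le_of_ne hle hne
          exact absurd hr (ne_of_lt (rank_lt_of_lt hwf hlt))
        · intro hle
          have hlt : y < x := lt_of_le_of_ne hle (Ne.symm hne)
          exact absurd hr.symm (ne_of_lt (rank_lt_of_lt hwf hlt))
      · -- main case: use MA on the finite-chains poset of Ws
        have hcompat : ∀ (c d : ChainCond T Ws), ∀ t ∈ c.1, ∀ s ∈ d.1,
            (∀ x ∈ c.1, x ≤ t) → (∀ x ∈ d.1, x ≤ s) → t ≤ s →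
            ∃ r, r ≤ c ∧ r ≤ d := by
          intro c d t ht s hs hgt hgs hts
          refine ⟨⟨c.1 ∪ d.1, ?_, ?_⟩, Finset.subset_union_left, Finset.subset_union_right⟩
          · intro x hx
            rcases Finset.mem_union.mp hx with h | h
            exacts [c.2.1 x h, d.2.1 x h]
          · intro x hx y hy hne
            have hx' : x ≤ s := by
              rcases Finset.mem_union.mp (Finset.mem_coe.mp hx) with h | h
              · exact (hgt x h).trans hts
              · exact hgs x h
            have hy' : y ≤ s := by
              rcases Finset.mem_union.mp (Finset.mem_coe.mp hy) with h | h
              · exact (hgt y h).trans hts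
              · exact hgs y h
            exact hDL s x y hx' hy'
        by_cases hccc : ForcingCCC (ChainCond T Ws)
        swap
        · -- not ccc: extract an uncountable tree antichain from a poset antichain
          unfold ForcingCCC at hccc
          push_neg at hccc
          obtain ⟨A, hpair, hAu⟩ := hccc
          have hA'u : ¬ {c ∈ A | c.1.Nonempty}.Countable := by
            intro hc
            apply hAu
            have hss : {c ∈ A | c.1 = ∅}.Subsingleton := by
              intro c hc' d hd'
              by_contra hne
              refine hpair hc'.1 hd'.1 hne d ?_ (le_refl d)
              change c.1 ⊆ d.1
              rw [hc'.2]
              exact Finset.empty_subset _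
            refine ((hc.union hss.countable).mono ?_)
            intro c hcA
            rcases Finset.eq_empty_or_nonempty c.1 with h | h
            · exact Set.mem_union_right _ ⟨hcA, h⟩
            · exact Set.mem_union_left _ ⟨hcA, h⟩
          set B : Set T := {t | ∃ c, (c ∈ A ∧ c.1.Nonempty) ∧ t ∈ c.1 ∧ ∀ x ∈ c.1, x ≤ t}
            with hBdef
          have hBu : ¬ B.Countable := by
            intro hBc
            apply hA'u
            have hsub : {c ∈ A | c.1.Nonempty} ⊆
                ⋃ t ∈ B, {c | (c ∈ A ∧ c.1.Nonempty) ∧ t ∈ c.1 ∧ ∀ x ∈ c.1, x ≤ t} := by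
              intro c hc
              obtain ⟨m, hm, hgm⟩ := chain_greatest hc.2 c.2.2
              exact Set.mem_biUnion ⟨c, hc, hm, hgm⟩ ⟨hc, hm, hgm⟩
            refine ((hBc.biUnion ?_).mono hsub)
            intro t htB
            apply Set.Subsingleton.countable
            intro c hc d hd
            by_contra hne
            obtain ⟨r, hr1, hr2⟩ := hcompat c d t hc.2.1 t hd.2.1 hc.2.2 hd.2.2 le_rfl
            exact hpair hc.1.1 hd.1.1 hne r hr1 hr2
          have hBp : B.Pairwise fun x y => ¬ x ≤ y ∧ ¬ y ≤ x := by
            intro t ht s hs hne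
            obtain ⟨c, hcA, htc, hgc⟩ := ht
            obtain ⟨d, hdA, hsd, hgd⟩ := hs
            have hcd : c ≠ d := by
              rintro rfl
              exact hne (le_antisymm (hgd t htc) (hgc s hsd))
            constructor
            · intro hts
              obtain ⟨r, hr1, hr2⟩ := hcompat c d t htc s hsd hgc hgd hts
              exact hpair hcA.1 hdA.1 hcd r hr1 hr2
            · intro hst
              obtain ⟨r, hr1, hr2⟩ := hcompat d c s hsd t htc hgd hgc hst
              exact hpair hdA.1 hcA.1 (Ne.symm hcd) r hr1 hr2
          refine ⟨B, ?_, hBu, hBp⟩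
          rintro t ⟨c, hcA, htc, -⟩
          exact hWsV (c.2.1 t htc)
        · -- ccc holds: MA produces an uncountable chain, contradiction
          exfalso
          set D : ↥Ws → Set (ChainCond T Ws) :=
            fun v => {c | ∃ u ∈ c.1, hwf.rank v.1 ≤ hwf.rank u} with hDdef
          have hdense : ∀ v : ↥Ws, ∀ p : ChainCond T Ws, ∃ q ≤ p, q ∈ D v := by
            intro v p
            rcases Finset.eq_empty_or_nonempty p.1 with h | h
            · refine ⟨⟨{v.1}, ?_, ?_⟩, ?_, ⟨v.1, Finset.mem_singleton_self _, le_rfl⟩⟩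
              · intro x hx
                rw [Finset.mem_singleton] at hx
                rw [hx]
                exact v.2
              · simp [IsChain]
              · change p.1 ⊆ _
                rw [h]
                exact Finset.empty_subset _
            · obtain ⟨m, hm, hgm⟩ := chain_greatest h p.2.2
              have hmW : m ∈ Ws := p.2.1 m hm
              obtain ⟨u, huW, hugt, huRank⟩ :
                  ∃ u, u ∈ Ws ∧ m < u ∧ hwf.rank v.1 ≤ hwf.rank u := by
                by_contra hcon
                push_neg at hcon
                apply hrich m hmW
                have hlev' : ∀ β, {x ∈ Ws ∩ Set.Ioi m | hwf.rank x = β}.Countable := by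
                  intro β
                  refine (hL β).mono ?_
                  intro x hx
                  exact ⟨hx.1.1, hx.2⟩
                refine ctble_of_rank_bounded hwf (Ws ∩ Set.Ioi m) hlev'
                  (ctble_Iic_ordinal (rank_lt_omega1 hwf hDL hcb v.1)) ?_
                rintro x ⟨hxW, hxgt⟩
                exact (hcon x hxW hxgt).le
              refine ⟨⟨insert u p.1, ?_, ?_⟩, ?_, ⟨u, Finset.mem_insert_self _ _, huRank⟩⟩
              · intro x hx
                rcases Finset.mem_insert.mp hx with h' | h'
                · rw [h']; exact huW
                · exact p.2.1 x h'
              · rw [Finset.coe_insert]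
                refine p.2.2.insert ?_
                intro b hb hne
                exact Or.inr ((hgm b (Finset.mem_coe.mp hb)).trans hugt.le)
              · change p.1 ⊆ _
                exact Finset.subset_insert _ _
          obtain ⟨F, hFfil, hFD⟩ := hMA (ChainCond T Ws) hccc (↥Ws) D
            (le_trans (Cardinal.mk_set_le _) hcard)
            (fun v p => hdense v p)
          set C : Set T := ⋃ c ∈ F, (↑c.1 : Set T) with hCdef
          have hCchain : IsChain (· ≤ ·) C := by
            intro x hx y hy hne
            obtain ⟨c1, hc1, hx1⟩ := Set.mem_iUnion₂.mp hx
            obtain ⟨c2, hc2, hy2⟩ := Set.mem_iUnion₂.mp hy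
            obtain ⟨r, hrF, hr1, hr2⟩ := hFfil.2.2 c1 hc1 c2 hc2
            have hxr : x ∈ r.1 := hr1 (Finset.mem_coe.mp hx1)
            have hyr : y ∈ r.1 := hr2 (Finset.mem_coe.mp hy2)
            exact r.2.2 (Finset.mem_coe.mpr hxr) (Finset.mem_coe.mpr hyr) hne
          have hCc : C.Countable := chain_ctble hcb hCchain
          apply hWs
          have hcover : Ws ⊆ ⋃ u ∈ C, {v ∈ Ws | hwf.rank v ≤ hwf.rank u} := by
            intro v hv
            obtain ⟨c, hcF, u, huc, hur⟩ := hFD ⟨v, hv⟩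
            have huC : u ∈ C := Set.mem_biUnion hcF (Finset.mem_coe.mpr huc)
            exact Set.mem_biUnion huC ⟨hv, hur⟩
          refine ((hCc.biUnion ?_).mono hcover)
          intro u huC
          have hlev' : ∀ β, {x ∈ {v ∈ Ws | hwf.rank v ≤ hwf.rank u} | hwf.rank x = β}.Countable := by
            intro β
            refine (hL β).mono ?_
            intro x hx
            exact ⟨hx.1.1, hx.2⟩
          exact ctble_of_rank_bounded hwf _ hlev'
            (ctble_Iic_ordinal (rank_lt_omega1 hwf hDL hcb u))
            (fun v hv => hv.2)

/-- Uncountable Δ-system lemma for finite sets of bounded size. -/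
lemma delta_system [DecidableEq T] : ∀ (n : ℕ) (𝒜 : Set (Finset T)), (∀ s ∈ 𝒜, s.card ≤ n) →
    ¬ 𝒜.Countable →
    ∃ ℬ ⊆ 𝒜, ¬ ℬ.Countable ∧ ∃ r : Finset T, ∀ s ∈ ℬ, ∀ t ∈ ℬ, s ≠ t → s ∩ t = r := by
  intro n
  induction n with
  | zero =>
    intro 𝒜 hcard hunc
    exfalso
    apply hunc
    apply Set.Subsingleton.countable
    intro s hs t ht
    have hs0 : s = ∅ := Finset.card_eq_zero.mp (Nat.le_zero.mp (hcard s hs))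
    have ht0 : t = ∅ := Finset.card_eq_zero.mp (Nat.le_zero.mp (hcard t ht))
    rw [hs0, ht0]
  | succ n ih =>
    intro 𝒜 hcard hunc
    by_cases hx : ∃ x : T, ¬ {s ∈ 𝒜 | x ∈ s}.Countable
    · obtain ⟨x, hxu⟩ := hx
      set 𝒜x : Set (Finset T) := {s ∈ 𝒜 | x ∈ s} with h𝒜x
      set ℰ : Set (Finset T) := (fun s : Finset T => s.erase x) '' 𝒜x with hℰ
      have hinj : Set.InjOn (fun s : Finset T => s.erase x) 𝒜x := by
        intro s hs t ht h
        rw [← Finset.insert_erase hs.2, ← Finset.insert_erase ht.2]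
        simp only at h
        rw [h]
      have hℰu : ¬ ℰ.Countable := by
        intro hc
        apply hxu
        have hsub : 𝒜x ⊆ ⋃ e ∈ ℰ, {s ∈ 𝒜x | s.erase x = e} := by
          intro s hs
          exact Set.mem_biUnion (Set.mem_image_of_mem _ hs) ⟨hs, rfl⟩
        refine ((hc.biUnion ?_).mono hsub)
        intro e heℰ
        apply Set.Subsingleton.countable
        intro s hs t ht
        exact hinj hs.1 ht.1 (hs.2.trans ht.2.symm)
      have hℰcard : ∀ e ∈ ℰ, e.card ≤ n := by
        rintro e ⟨s, hs, rfl⟩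
        show (s.erase x).card ≤ n
        have h1 := Finset.card_erase_of_mem hs.2
        have hsc := hcard s hs.1
        omega
      obtain ⟨ℬ', hℬ'sub, hℬ'u, r', hr'⟩ := ih ℰ hℰcard hℰu
      set ℬ : Set (Finset T) := {s ∈ 𝒜x | s.erase x ∈ ℬ'} with hℬ
      have hℬu : ¬ ℬ.Countable := by
        intro hc
        apply hℬ'u
        refine ((hc.image (fun s => s.erase x)).mono ?_)
        intro e he
        obtain ⟨s, hs, rfl⟩ := hℬ'sub he
        exact ⟨s, ⟨hs, (by exact he : s.erase x ∈ ℬ')⟩, rfl⟩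
      refine ⟨ℬ, fun s hs => hs.1.1, hℬu, insert x r', ?_⟩
      intro s hs t ht hne
      have h1 : s.erase x ≠ t.erase x := fun h => hne (hinj hs.1 ht.1 h)
      have h2 : (s.erase x) ∩ (t.erase x) = r' := hr' _ hs.2 _ ht.2 h1
      ext a
      by_cases ha : a = x
      · subst ha
        simp [hs.1.2, ht.1.2]
      · constructor
        · intro haM
          rw [Finset.mem_inter] at haM
          have : a ∈ (s.erase x) ∩ (t.erase x) := by
            rw [Finset.mem_inter]
            exact ⟨Finset.mem_erase.mpr ⟨ha, haM.1⟩, Finset.mem_erase.mpr ⟨ha, haM.2⟩⟩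
          rw [h2] at this
          exact Finset.mem_insert_of_mem this
        · intro haM
          rcases Finset.mem_insert.mp haM with h | h
          · exact absurd h ha
          · rw [← h2] at h
            rw [Finset.mem_inter] at h ⊢
            exact ⟨Finset.mem_of_mem_erase h.1, Finset.mem_of_mem_erase h.2⟩
    · push_neg at hx
      set 𝒟 : Set (Set (Finset T)) :=
        {ℬ | ℬ ⊆ 𝒜 ∧ ℬ.Pairwise fun s t => s ∩ t = ∅} with h𝒟
      have hZ : ∀ c ⊆ 𝒟, IsChain (· ⊆ ·) c → c.Nonempty →
          ∃ ub ∈ 𝒟, ∀ s ∈ c, s ⊆ ub := by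
        intro c hcS hchain hcne
        refine ⟨⋃₀ c, ⟨?_, ?_⟩, fun s hs => Set.subset_sUnion_of_mem hs⟩
        · exact Set.sUnion_subset fun s hs => (hcS hs).1
        · intro u hu v hv hne
          obtain ⟨su, hsu, hus⟩ := hu
          obtain ⟨sv, hsv, hvs⟩ := hv
          rcases hchain.total hsu hsv with h | h
          · exact (hcS hsv).2 (h hus) hvs hne
          · exact (hcS hsu).2 hus (h hvs) hne
      obtain ⟨ℬ, -, hmax⟩ := zorn_subset_nonempty 𝒟 hZ ∅ ⟨by simp, by simp⟩
      refine ⟨ℬ, hmax.prop.1, ?_, ∅, fun s hs t ht hne => hmax.prop.2 hs ht hne⟩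
      intro hc
      have hU : (⋃ s ∈ ℬ, (↑s : Set T)).Countable :=
        hc.biUnion fun s _ => s.finite_toSet.countable
      apply hunc
      have hsub : 𝒜 ⊆ ℬ ∪ ⋃ x ∈ ⋃ s ∈ ℬ, (↑s : Set T), {s ∈ 𝒜 | x ∈ s} := by
        intro s hs
        by_cases hsB : s ∈ ℬ
        · exact Set.mem_union_left _ hsB
        · have : ¬ ∀ t ∈ ℬ, s ∩ t = ∅ := by
            intro hall
            have hins : insert s ℬ ∈ 𝒟 := by
              refine ⟨Set.insert_subset hs hmax.prop.1, ?_⟩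
              refine Set.Pairwise.insert hmax.prop.2 ?_
              intro t ht hne
              exact ⟨hall t ht, by rw [Finset.inter_comm]; exact hall t ht⟩
            exact hsB (hmax.le_of_ge hins (Set.subset_insert _ _) (Set.mem_insert _ _))
          push_neg at this
          obtain ⟨t, htB, hst⟩ := this
          obtain ⟨a, ha⟩ := hst
          rw [Finset.mem_inter] at ha
          refine Set.mem_union_right _ ?_
          refine Set.mem_biUnion (Set.mem_biUnion htB ?_) ⟨hs, ha.1⟩
          exact Finset.mem_coe.mpr ha.2
      refine ((hc.union (hU.biUnion fun x _ => hx x)).mono hsub)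

/-- monotonicity property of a finite partial function coded as a finset of pairs -/
def MonoSet (p : Finset (T × ℚ)) : Prop :=
  ∀ z ∈ p, ∀ w ∈ p, ((z : T × ℚ).1 < (w : T × ℚ).1 → z.2 < w.2) ∧ (z.1 = w.1 → z.2 = w.2)

lemma MonoSet.subset {p q : Finset (T × ℚ)} (h : q ⊆ p) (hp : MonoSet p) : MonoSet q :=
  fun z hz w hw => hp z (h hz) w (h hw)

def Cond (T : Type) [PartialOrder T] : Type := {p : Finset (T × ℚ) // MonoSet p}

instance : PartialOrder (Cond T) where
  le p q := q.1 ⊆ p.1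
  le_refl p := Finset.Subset.refl _
  le_trans a b c hab hbc := Finset.Subset.trans hbc hab
  le_antisymm a b hab hba := Subtype.ext (Finset.Subset.antisymm hba hab)

instance : OrderTop (Cond T) where
  top := ⟨∅, by intro z hz; simp at hz⟩
  le_top c := by
    show (∅ : Finset _) ⊆ c.1
    simp

/-- density of the sets `D x` -/
lemma cond_dense (x : T) (p : Cond T) :
    ∃ q ≤ p, ∃ v : ℚ, (x, v) ∈ q.1 := by
  classical
  by_cases hx : x ∈ p.1.image Prod.fst
  · obtain ⟨z, hz, hz1⟩ := Finset.mem_image.mp hx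
    exact ⟨p, le_refl p, z.2, by rwa [show (x, z.2) = z from Prod.ext hz1.symm rfl]⟩
  · -- choose a suitable rational value
    set LB : Finset ℚ := (p.1.filter (fun z => z.1 < x)).image Prod.snd with hLB
    set UB : Finset ℚ := (p.1.filter (fun z => x < z.1)).image Prod.snd with hUB
    have hLU : ∀ a ∈ LB, ∀ b ∈ UB, a < b := by
      intro a ha b hb
      obtain ⟨z, hz, rfl⟩ := Finset.mem_image.mp ha
      obtain ⟨w, hw, rfl⟩ := Finset.mem_image.mp hb
      rw [Finset.mem_filter] at hz hw
      exact (p.2 z hz.1 w hw.1).1 (hz.2.trans hw.2)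
    obtain ⟨qv, hqL, hqU⟩ : ∃ qv : ℚ, (∀ a ∈ LB, a < qv) ∧ (∀ b ∈ UB, qv < b) := by
      rcases LB.eq_empty_or_nonempty with hL | hL
      · rcases UB.eq_empty_or_nonempty with hU | hU
        · exact ⟨0, by simp [hL], by simp [hU]⟩
        · refine ⟨UB.min' hU - 1, by simp [hL], ?_⟩
          intro b hb
          have := UB.min'_le b hb
          linarith
      · rcases UB.eq_empty_or_nonempty with hU | hU
        · refine ⟨LB.max' hL + 1, ?_, by simp [hU]⟩
          intro a ha
          have := LB.le_max' a ha
          linarith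
        · obtain ⟨qv, h1, h2⟩ := exists_between (hLU _ (LB.max'_mem hL) _ (UB.min'_mem hU))
          refine ⟨qv, ?_, ?_⟩
          · intro a ha
            exact lt_of_le_of_lt (LB.le_max' a ha) h1
          · intro b hb
            exact lt_of_lt_of_le h2 (UB.min'_le b hb)
    have hnew : MonoSet (insert (x, qv) p.1) := by
      intro z hz w hw
      rcases Finset.mem_insert.mp hz with hz' | hz' <;>
        rcases Finset.mem_insert.mp hw with hw' | hw'
      · subst hz'; subst hw'
        exact ⟨fun h => absurd h (lt_irrefl x), fun _ => rfl⟩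
      · subst hz'
        constructor
        · intro h
          refine hqU w.2 ?_
          rw [hUB]
          exact Finset.mem_image.mpr ⟨w, Finset.mem_filter.mpr ⟨hw', h⟩, rfl⟩
        · intro h
          exact absurd (Finset.mem_image.mpr ⟨w, hw', h.symm⟩) hx
      · subst hw'
        constructor
        · intro h
          refine hqL z.2 ?_
          rw [hLB]
          exact Finset.mem_image.mpr ⟨z, Finset.mem_filter.mpr ⟨hz', h⟩, rfl⟩
        · intro h
          exact absurd (Finset.mem_image.mpr ⟨z, hz', h⟩) hx
      · exact p.2 z hz' w hw'
    refine ⟨⟨insert (x, qv) p.1, hnew⟩, ?_, qv, Finset.mem_insert_self _ _⟩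
    change p.1 ⊆ _
    exact Finset.subset_insert _ _

/-- countability pigeonhole helpers -/
lemma unc_fiber_of_ctble_ty {α β : Type} [Countable β] (f : α → β) (A : Set α)
    (hA : ¬ A.Countable) : ∃ b, ¬ {a ∈ A | f a = b}.Countable := by
  by_contra h
  push_neg at h
  apply hA
  have hsub : A ⊆ ⋃ b : β, {a ∈ A | f a = b} := fun a ha => Set.mem_iUnion.mpr ⟨f a, ha, rfl⟩
  exact (Set.countable_iUnion h).mono hsub

lemma unc_image_of_ctble_fibers {α β : Type} (f : α → β) (A : Set α)
    (hA : ¬ A.Countable) (hfib : ∀ b, {a ∈ A | f a = b}.Countable) :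
    ¬ (f '' A).Countable := by
  intro hc
  apply hA
  have hsub : A ⊆ ⋃ b ∈ f '' A, {a ∈ A | f a = b} :=
    fun a ha => Set.mem_biUnion (Set.mem_image_of_mem f ha) ⟨ha, rfl⟩
  exact (hc.biUnion fun b _ => hfib b).mono hsub

lemma exists_unc_fiber_of_ctble_image {α β : Type} (f : α → β) (A : Set α)
    (hA : ¬ A.Countable) (himg : (f '' A).Countable) :
    ∃ b, ¬ {a ∈ A | f a = b}.Countable := by
  by_contra h
  push_neg at h
  apply hA
  have hsub : A ⊆ ⋃ b ∈ f '' A, {a ∈ A | f a = b} :=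
    fun a ha => Set.mem_biUnion (Set.mem_image_of_mem f ha) ⟨ha, rfl⟩
  exact (himg.biUnion fun b _ => h b).mono hsub

lemma ctble_of_injOn_image {α β : Type} {S : Set α} {f : α → β}
    (hinj : Set.InjOn f S) (himg : (f '' S).Countable) : S.Countable := by
  have hsub : S ⊆ ⋃ b ∈ f '' S, {a ∈ S | f a = b} :=
    fun a ha => Set.mem_biUnion ⟨a, ha, rfl⟩ ⟨ha, rfl⟩
  refine (himg.biUnion ?_).mono hsub
  intro b hb
  apply Set.Subsingleton.countable
  intro a1 h1 a2 h2
  exact hinj h1.1 h2.1 (h1.2.trans h2.2.symm)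

lemma ctble_funcsets (r : Finset T) :
    {q : Finset (T × ℚ) | MonoSet q ∧ ∀ z ∈ q, (z : T × ℚ).1 ∈ r}.Countable := by
  classical
  set f : Finset (T × ℚ) → (↥r → Option ℚ) :=
    fun q t => if h : ∃ v, ((t : T), v) ∈ q then some h.choose else none with hf
  have hkey : ∀ q, MonoSet q → ∀ z ∈ q, ∀ (ht : (z : T × ℚ).1 ∈ r),
      f q ⟨z.1, ht⟩ = some z.2 := by
    intro q hq z hz ht
    have hex : ∃ v, ((z.1 : T), v) ∈ q := ⟨z.2, by rwa [Prod.mk.eta]⟩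
    rw [hf]
    simp only [dif_pos hex]
    congr 1
    exact (hq _ hex.choose_spec z hz).2 rfl
  apply ctble_of_injOn_image (f := f) ?_ (Set.to_countable _)
  intro q1 hq1 q2 hq2 hfeq
  ext z
  constructor
  · intro hz
    have ht := hq1.2 z hz
    have h1 := hkey q1 hq1.1 z hz ht
    rw [hfeq] at h1
    rw [hf] at h1
    by_cases hex : ∃ v, ((z.1 : T), v) ∈ q2
    · simp only [dif_pos hex] at h1
      have := hex.choose_spec
      rw [Option.some_inj.mp h1] at this
      rwa [Prod.mk.eta] at this
    · simp [dif_neg hex] at h1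
  · intro hz
    have ht := hq2.2 z hz
    have h1 := hkey q2 hq2.1 z hz ht
    rw [← hfeq] at h1
    rw [hf] at h1
    by_cases hex : ∃ v, ((z.1 : T), v) ∈ q1
    · simp only [dif_pos hex] at h1
      have := hex.choose_spec
      rw [Option.some_inj.mp h1] at this
      rwa [Prod.mk.eta] at this
    · simp [dif_neg hex] at h1

lemma ctble_same_dom [DecidableEq T] (d : Finset T) :
    {p : Cond T | p.1.image Prod.fst = d}.Countable := by
  apply ctble_of_injOn_image (f := fun p : Cond T => p.1)
    (fun a _ b _ h => Subtype.ext h)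
  refine (ctble_funcsets d).mono ?_
  rintro q ⟨p, hp, rfl⟩
  refine ⟨p.2, ?_⟩
  intro z hz
  rw [← hp]
  exact Finset.mem_image_of_mem _ hz

/-- ccc of the specialising poset -/
theorem cond_ccc (κ : Cardinal) (hMA : MartinsAxiom κ)
    (hDL : DownLinear T) (hWF : ∀ x : T, (Set.Iio x).IsWF)
    (hcb : ∀ B : Set T, IsMaxChain (· ≤ ·) B → B.Countable)
    (hcard : Cardinal.mk T ≤ κ) :
    ForcingCCC (Cond T) := by
  classical
  intro A hA
  by_contra hAu
  -- fix the size of conditions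
  obtain ⟨n, hn⟩ := unc_fiber_of_ctble_ty (fun p : Cond T => p.1.card) A hAu
  set A1 : Set (Cond T) := {p ∈ A | p.1.card = n} with hA1
  set dom : Cond T → Finset T := fun p => p.1.image Prod.fst with hdom
  have hdomfib : ∀ d : Finset T, {p ∈ A1 | dom p = d}.Countable :=
    fun d => (ctble_same_dom d).mono fun p hp => hp.2
  have hdomu : ¬ (dom '' A1).Countable :=
    unc_image_of_ctble_fibers dom A1 hn hdomfib
  have hdomcard : ∀ d ∈ dom '' A1, d.card ≤ n := by
    rintro d ⟨p, hp, rfl⟩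
    calc (dom p).card ≤ p.1.card := Finset.card_image_le
      _ = n := hp.2
  obtain ⟨ℬ, hℬsub, hℬu, r, hroot⟩ := delta_system n (dom '' A1) hdomcard hdomu
  have hchoice : ∀ d ∈ ℬ, ∃ p, p ∈ A1 ∧ dom p = d := fun d hd => hℬsub hd
  choose! g hg1 hg2 using hchoice
  set A2 : Set (Cond T) := g '' ℬ with hA2
  have hA2u : ¬ A2.Countable := by
    intro hc
    apply hℬu
    refine ((hc.image dom).mono ?_)
    rintro d hd
    exact ⟨g d, Set.mem_image_of_mem g hd, hg2 d hd⟩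
  have hA2sub : A2 ⊆ A1 := by
    rintro p ⟨d, hd, rfl⟩
    exact hg1 d hd
  have hA2dom : ∀ p ∈ A2, ∀ q ∈ A2, p ≠ q → dom p ∩ dom q = r := by
    rintro p ⟨d, hd, rfl⟩ q ⟨d', hd', rfl⟩ hne
    have hdd : d ≠ d' := fun h => hne (by rw [h])
    rw [hg2 d hd, hg2 d' hd']
    exact hroot d hd d' hd' hdd
  -- root restriction
  set ρ : Cond T → Finset (T × ℚ) := fun p => p.1.filter (fun z => z.1 ∈ r) with hρ
  have hρim : ((ρ '' A2)).Countable := by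
    refine (ctble_funcsets r).mono ?_
    rintro q ⟨p, hp, rfl⟩
    constructor
    · exact p.2.subset (Finset.filter_subset _ _)
    · intro z hz
      exact (Finset.mem_filter.mp hz).2
  obtain ⟨ρ₀, hA3u⟩ := exists_unc_fiber_of_ctble_image ρ A2 hA2u hρim
  set A3 : Set (Cond T) := {p ∈ A2 | ρ p = ρ₀} with hA3
  have hA3A : A3 ⊆ A := fun p hp => (hA2sub hp.1).1
  have hA3card : ∀ p ∈ A3, p.1.card = n := fun p hp => (hA2sub hp.1).2
  -- the cross-link lemma
  set Fp : Cond T → Finset T := fun p => dom p \ r with hFp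
  have hdomeq : ∀ p ∈ A3, ∀ z ∈ p.1, (z : T × ℚ).1 ∈ r → z ∈ ρ₀ := by
    intro p hp z hz hzr
    rw [← hp.2, hρ]
    exact Finset.mem_filter.mpr ⟨hz, hzr⟩
  have hρsub : ∀ p ∈ A3, ρ₀ ⊆ p.1 := by
    intro p hp
    rw [← hp.2, hρ]
    exact Finset.filter_subset _ _
  have hmain : ∀ p ∈ A3, ∀ q ∈ A3, ∀ z ∈ p.1, ∀ w ∈ q.1,
      ((z : T × ℚ).1 < (w : T × ℚ).1 ∨ z.1 = w.1) →
      ¬ (((z : T × ℚ).1 < w.1 → z.2 < w.2) ∧ (z.1 = w.1 → z.2 = w.2)) →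
      ∃ x ∈ Fp p, ∃ y ∈ Fp q, (x ≤ y ∨ y ≤ x) := by
    intro p hp q hq z hz w hw hcomp hviol
    by_cases hpq : p = q
    · subst hpq
      exact absurd (p.2 z hz w hw) hviol
    have hzw : (z : T × ℚ).1 ≠ w.1 := by
      intro heq
      have hz1r : (z : T × ℚ).1 ∈ r := by
        have : (z : T × ℚ).1 ∈ dom p ∩ dom q := by
          rw [Finset.mem_inter]
          exact ⟨Finset.mem_image_of_mem _ hz, heq ▸ Finset.mem_image_of_mem _ hw⟩
        rwa [hA2dom p hp.1 q hq.1 hpq] at this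
      have hzq : z ∈ q.1 := hρsub q hq (hdomeq p hp z hz hz1r)
      exact hviol (q.2 z hzq w hw)
    have hlt : (z : T × ℚ).1 < w.1 := hcomp.resolve_right hzw
    by_cases hz1r : (z : T × ℚ).1 ∈ r
    · have hzq : z ∈ q.1 := hρsub q hq (hdomeq p hp z hz hz1r)
      exact absurd (q.2 z hzq w hw) hviol
    by_cases hw1r : (w : T × ℚ).1 ∈ r
    · have hwp : w ∈ p.1 := hρsub p hp (hdomeq q hq w hw hw1r)
      exact absurd (p.2 z hz w hwp) hviol
    refine ⟨z.1, ?_, w.1, ?_, Or.inl hlt.le⟩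
    · exact Finset.mem_sdiff.mpr ⟨Finset.mem_image_of_mem _ hz, hz1r⟩
    · exact Finset.mem_sdiff.mpr ⟨Finset.mem_image_of_mem _ hw, hw1r⟩
  have hlink : ∀ p ∈ A3, ∀ q ∈ A3, p ≠ q →
      ∃ x ∈ Fp p, ∃ y ∈ Fp q, (x ≤ y ∨ y ≤ x) := by
    intro p hp q hq hne
    have hinc : ¬ ∃ s, s ≤ p ∧ s ≤ q := hA (hA3A hp) (hA3A hq) hne
    have hnm : ¬ MonoSet (p.1 ∪ q.1) := by
      intro hm
      exact hinc ⟨⟨p.1 ∪ q.1, hm⟩, Finset.subset_union_left, Finset.subset_union_right⟩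
    have hex : ∃ z ∈ p.1 ∪ q.1, ∃ w ∈ p.1 ∪ q.1,
        ¬ (((z : T × ℚ).1 < (w : T × ℚ).1 → z.2 < w.2) ∧ (z.1 = w.1 → z.2 = w.2)) := by
      by_contra hc
      push_neg at hc
      exact hnm fun z hz w hw => hc z hz w hw
    obtain ⟨z, hz, w, hw, hviol⟩ := hex
    have hcomp : (z : T × ℚ).1 < (w : T × ℚ).1 ∨ z.1 = w.1 := by
      by_contra hcc
      push_neg at hcc
      exact hviol ⟨fun h => absurd h hcc.1, fun h => absurd h hcc.2⟩
    rcases Finset.mem_union.mp hz with hzp | hzq <;> rcases Finset.mem_union.mp hw with hwp | hwq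
    · exact absurd (p.2 z hzp w hwp) hviol
    · exact hmain p hp q hq z hzp w hwq hcomp hviol
    · obtain ⟨x, hx, y, hy, hxy⟩ := hmain q hq p hp z hzq w hwp hcomp hviol
      exact ⟨y, hy, x, hx, hxy.symm⟩
    · exact absurd (q.2 z hzq w hwq) hviol
  -- disjointness of the reduced domains
  have hFdisj : ∀ p ∈ A3, ∀ q ∈ A3, p ≠ q → ∀ x, x ∈ Fp p → x ∈ Fp q → False := by
    intro p hp q hq hne x hxp hxq
    have h1 := Finset.mem_sdiff.mp hxp
    have h2 := Finset.mem_sdiff.mp hxq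
    apply h1.2
    rw [← hA2dom p hp.1 q hq.1 hne]
    exact Finset.mem_inter.mpr ⟨h1.1, h2.1⟩
  have hA3two : ∃ p ∈ A3, ∃ q ∈ A3, p ≠ q := by
    by_contra hc
    push_neg at hc
    exact hA3u (Set.Subsingleton.countable fun a ha b hb => hc a ha b hb)
  have hdcard : ∀ p ∈ A3, (dom p).card = n := by
    intro p hp
    rw [hdom]
    rw [Finset.card_image_of_injOn]
    · exact hA3card p hp
    · intro z hz w hw h
      exact Prod.ext h ((p.2 z hz w hw).2 h)
  have hrsub : ∀ p ∈ A3, r ⊆ dom p := by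
    intro p hp
    obtain ⟨p0, hp0, q0, hq0, hne0⟩ := hA3two
    by_cases hpp : p = q0
    · rw [← hA2dom p hp.1 p0 hp0.1 (by rw [hpp]; exact hne0.symm)]
      exact Finset.inter_subset_left
    · rw [← hA2dom p hp.1 q0 hq0.1 hpp]
      exact Finset.inter_subset_left
  set m : ℕ := n - r.card with hm
  have hFcard : ∀ p ∈ A3, (Fp p).card = m := by
    intro p hp
    rw [hFp]
    simp only
    rw [Finset.card_sdiff_of_subset (hrsub p hp), hdcard p hp]
  -- enumerations of the reduced domains
  have henum : ∀ p, p ∈ A3 → ∃ e : Fin m → T,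
      (∀ k, e k ∈ Fp p) ∧ (∀ x ∈ Fp p, ∃ k, e k = x) := by
    intro p hp
    have hc : (Fp p).card = m := hFcard p hp
    have equ := Finset.equivFinOfCardEq hc
    refine ⟨fun k => (equ.symm k : ↥(Fp p)).1, ?_, ?_⟩
    · intro k
      exact (equ.symm _).2
    · intro x hx
      refine ⟨equ ⟨x, hx⟩, ?_⟩
      show ((equ.symm (equ ⟨x, hx⟩) : ↥(Fp p)) : T) = x
      rw [Equiv.symm_apply_apply]
  have hTne : Nonempty T := by
    by_contra hTe
    apply hAu
    apply Set.Subsingleton.countable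
    intro a ha b hb
    have hIE : IsEmpty T := not_nonempty_iff.mp hTe
    apply Subtype.ext
    rw [Finset.eq_empty_of_isEmpty a.1, Finset.eq_empty_of_isEmpty b.1]
  choose! e he1 he2 using henum
  -- coordinatewise refinement into antichains
  have hrefine : ∀ k : ℕ, k ≤ m → ∃ Z ⊆ A3, ¬ Z.Countable ∧
      ∀ j : Fin m, (j : ℕ) < k → ∀ p ∈ Z, ∀ q ∈ Z, p ≠ q →
        ¬ e p j ≤ e q j ∧ ¬ e q j ≤ e p j := by
    intro k
    induction k with
    | zero =>
      exact fun _ => ⟨A3, le_refl _, hA3u, fun j hj => absurd hj (Nat.not_lt_zero _)⟩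
    | succ k ih =>
      intro hk1
      obtain ⟨Z, hZsub, hZu, hZp⟩ := ih (Nat.le_of_succ_le hk1)
      have hkm : k < m := hk1
      set j0 : Fin m := ⟨k, hkm⟩ with hj0def
      set cf : Cond T → T := fun p => e p j0 with hcf
      have hfib : ∀ t, {p ∈ Z | cf p = t}.Countable := by
        intro t
        apply Set.Subsingleton.countable
        intro p hp q hq
        by_contra hne
        refine hFdisj p (hZsub hp.1) q (hZsub hq.1) hne (cf p)
          (he1 p (hZsub hp.1) j0) ?_
        rw [hp.2, ← hq.2]
        exact he1 q (hZsub hq.1) j0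
      have hVu : ¬ (cf '' Z).Countable := unc_image_of_ctble_fibers cf Z hZu hfib
      obtain ⟨Av, hAvsub, hAvu, hAvp⟩ :=
        exists_unc_antichain κ hMA hDL hWF hcb hcard _ hVu
      set Z' : Set (Cond T) := {p ∈ Z | cf p ∈ Av} with hZ'
      have hZ'u : ¬ Z'.Countable := by
        intro hc
        apply hAvu
        refine ((hc.image cf).mono ?_)
        intro t ht
        obtain ⟨p, hp, rfl⟩ := hAvsub ht
        exact ⟨p, ⟨hp, ht⟩, rfl⟩
      refine ⟨Z', fun p hp => hZsub hp.1, hZ'u, ?_⟩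
      intro j hj p hp q hq hne
      rcases Nat.lt_succ_iff_lt_or_eq.mp hj with hlt | heq
      · exact hZp j hlt p hp.1 q hq.1 hne
      · have hj0 : j = j0 := Fin.ext heq
        subst hj0
        have hne' : cf p ≠ cf q := by
          intro h
          refine hFdisj p (hZsub hp.1) q (hZsub hq.1) hne (cf p)
            (he1 p (hZsub hp.1) j0) ?_
          rw [h]
          exact he1 q (hZsub hq.1) j0
        exact hAvp hp.2 hq.2 hne'
  obtain ⟨Z, hZsub, hZu, hZp⟩ := hrefine m (le_refl m)
  -- choose a long "directed" sequence inside Z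
  have hsel : ∀ N : ℕ, ∃ l : List (Cond T), l.length = N ∧ (∀ p ∈ l, p ∈ Z) ∧
      l.Pairwise (fun a b => a ≠ b ∧ ∀ x ∈ Fp b, ∀ y ∈ Fp a, ¬ x ≤ y) := by
    intro N
    induction N with
    | zero => exact ⟨[], rfl, by simp, List.Pairwise.nil⟩
    | succ N ihN =>
      obtain ⟨l, hlen, hmem, hpw⟩ := ihN
      set Bad : Set (Cond T) :=
        {p ∈ Z | ∃ a ∈ l, p = a ∨ ∃ x ∈ Fp p, ∃ y ∈ Fp a, x ≤ y} with hBad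
      have hBadc : Bad.Countable := by
        have hsub : Bad ⊆ ⋃ a ∈ {b | b ∈ l},
            ({a} ∪ ⋃ y ∈ (↑(Fp a) : Set T), {p ∈ Z | ∃ x ∈ Fp p, x ≤ y}) := by
          rintro p ⟨hpZ, a, ha, hcase⟩
          refine Set.mem_biUnion ha ?_
          rcases hcase with h | ⟨x, hx, y, hy, hxy⟩
          · exact Set.mem_union_left _ (by rw [h]; exact rfl)
          · exact Set.mem_union_right _
              (Set.mem_biUnion (Finset.mem_coe.mpr hy) ⟨hpZ, x, hx, hxy⟩)
        refine (Set.Countable.biUnion ?_ ?_).mono hsub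
        · exact l.finite_toSet.countable
        · intro a ha
          refine (Set.countable_singleton a).union
            ((Fp a).finite_toSet.countable.biUnion ?_)
          intro y hy
          have hsub2 : {p ∈ Z | ∃ x ∈ Fp p, x ≤ y} ⊆
              ⋃ x ∈ Set.Iic y, {p ∈ Z | x ∈ Fp p} := by
            rintro p ⟨hpZ, x, hx, hxy⟩
            exact Set.mem_biUnion hxy ⟨hpZ, hx⟩
          refine ((ctble_Iic hDL hcb y).biUnion ?_).mono hsub2
          intro x hx
          apply Set.Subsingleton.countable
          intro p hp q hq
          by_contra hne
          exact hFdisj p (hZsub hp.1) q (hZsub hq.1) hne x hp.2 hq.2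
      obtain ⟨p0, hp0Z, hp0B⟩ : ∃ p0 ∈ Z, p0 ∉ Bad := by
        by_contra hc
        push_neg at hc
        exact hZu (hBadc.mono hc)
      refine ⟨l ++ [p0], by simp [hlen], ?_, ?_⟩
      · intro p hp
        rcases List.mem_append.mp hp with h | h
        · exact hmem p h
        · rw [List.mem_singleton.mp h]
          exact hp0Z
      · rw [List.pairwise_append]
        refine ⟨hpw, List.pairwise_singleton _ _, ?_⟩
        intro a ha b hb
        rw [List.mem_singleton.mp hb]
        constructor
        · intro h
          exact hp0B ⟨hp0Z, a, ha, Or.inl h.symm⟩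
        · intro x hx y hy hxy
          exact hp0B ⟨hp0Z, a, ha, Or.inr ⟨x, hx, y, hy, hxy⟩⟩
  -- final pigeonhole
  obtain ⟨l, hlen, hmem, hpw⟩ := hsel (m * m + 2)
  rw [List.pairwise_iff_get] at hpw
  set σ : Fin (m * m + 2) → Cond T := fun i => l.get (Fin.cast hlen.symm i) with hσ
  have hσZ : ∀ i, σ i ∈ Z := fun i => hmem _ (l.get_mem _)
  have hσR : ∀ i j : Fin (m * m + 2), i < j →
      σ i ≠ σ j ∧ ∀ x ∈ Fp (σ j), ∀ y ∈ Fp (σ i), ¬ x ≤ y := by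
    intro i j hij
    exact hpw (Fin.cast hlen.symm i) (Fin.cast hlen.symm j) (by simpa using hij)
  set J : Fin (m * m + 2) := ⟨m * m + 1, Nat.lt_succ_self _⟩ with hJ
  set q : Cond T := σ J with hqdef
  have hq3 : q ∈ A3 := hZsub (hσZ J)
  have hstep : ∀ i : Fin (m * m + 1), ∃ kl : Fin m × Fin m,
      e (σ ⟨i.1, Nat.lt_succ_of_lt i.2⟩) kl.1 ≤ e q kl.2 := by
    intro i
    set i' : Fin (m * m + 2) := ⟨i.1, Nat.lt_succ_of_lt i.2⟩ with hi'
    have hij : i' < J := by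
      rw [hJ]
      exact i.2
    obtain ⟨hneq, hdir⟩ := hσR i' J hij
    have hpi3 : σ i' ∈ A3 := hZsub (hσZ i')
    obtain ⟨x, hx, y, hy, hxy⟩ := hlink (σ i') hpi3 q hq3 hneq
    have hxle : x ≤ y := by
      rcases hxy with h | h
      · exact h
      · exact absurd h (hdir y hy x hx)
    obtain ⟨k, hk⟩ := he2 (σ i') hpi3 x hx
    obtain ⟨kq, hkq⟩ := he2 q hq3 y hy
    refine ⟨(k, kq), ?_⟩
    rw [hk, hkq]
    exact hxle
  choose φ hφ using hstep
  have hcard' : Fintype.card (Fin m × Fin m) < Fintype.card (Fin (m * m + 1)) := by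
    simp [Fintype.card_prod]
  obtain ⟨i1, i2, hne12, heq12⟩ := Fintype.exists_ne_map_eq_of_card_lt φ hcard'
  set ι : Fin (m * m + 1) → Fin (m * m + 2) := fun i => ⟨i.1, Nat.lt_succ_of_lt i.2⟩ with hι
  have h1 := hφ i1
  have h2 := hφ i2
  rw [heq12] at h1
  have hcompar := hDL (e q (φ i2).2) _ _ h1 h2
  have hnep : σ (ι i1) ≠ σ (ι i2) := by
    have hιne : ι i1 ≠ ι i2 := by
      intro h
      apply hne12
      have hval : (ι i1).val = (ι i2).val := congrArg Fin.val h
      exact Fin.ext hval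
    rcases lt_or_gt_of_ne hιne with h | h
    · exact (hσR _ _ h).1
    · exact ((hσR _ _ h).1).symm
  have hinc := hZp (φ i2).1 (φ i2).1.2 (σ (ι i1)) (hσZ _) (σ (ι i2)) (hσZ _) hnep
  rcases hcompar with h | h
  · exact hinc.1 h
  · exact hinc.2 h


end MAWS2

/-- Under `MA_κ`, every well-stratified tree of size at most `κ` with no
uncountable branches admits a strictly monotonic map into ℚ. -/
theorem MA_wstree_rat_gradable (κ : Cardinal) (hMA : MartinsAxiom κ)
    (T : Type) [PartialOrder T] (hT : IsWSTree T)
    (hcb : ∀ B : Set T, IsMaxChain (· ≤ ·) B → B.Countable)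
    (hcard : Cardinal.mk T ≤ κ) :
    ∃ f : T → ℚ, StrictMono f := by
  classical
  obtain ⟨hrooted, hDL, hWF⟩ := hT
  have hccc := MAWS2.cond_ccc κ hMA hDL hWF hcb hcard
  set D : T → Set (MAWS2.Cond T) := fun x => {p | ∃ v : ℚ, (x, v) ∈ p.1} with hD
  have hdense : ∀ x : T, ∀ p : MAWS2.Cond T, ∃ q ≤ p, q ∈ D x := by
    intro x p
    obtain ⟨q, hqp, v, hv⟩ := MAWS2.cond_dense x p
    exact ⟨q, hqp, v, hv⟩
  obtain ⟨F, hFfil, hFD⟩ := hMA (MAWS2.Cond T) hccc T D hcard hdense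
  have hval : ∀ x : T, ∃ v : ℚ, ∃ p ∈ F, (x, v) ∈ p.1 := by
    intro x
    obtain ⟨p, hpF, v, hv⟩ := hFD x
    exact ⟨v, p, hpF, hv⟩
  choose f hf using hval
  refine ⟨f, ?_⟩
  intro x y hxy
  obtain ⟨px, hpx, hx⟩ := hf x
  obtain ⟨py, hpy, hy⟩ := hf y
  obtain ⟨rr, hrF, hr1, hr2⟩ := hFfil.2.2 px hpx py hpy
  have hx' : (x, f x) ∈ rr.1 := hr1 hx
  have hy' : (y, f y) ∈ rr.1 := hr2 hy
  exact (rr.2 _ hx' _ hy').1 hxy
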